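/- The binomial distribution is a mixture of spillage distributions over the occupancy distribution: for 0 < θ ≤ 1, m ≥ 1, and 0 ≤ x ≤ n, Bin(x | n, θ) = ∑_{k=0}^{x} Spillage(x - k | n, k, m·(1-θ)/θ) · Occ(k | n, m, θ). -/

import Mathlib

open Finset Filter Real

/-- Central Stirling numbers of the second kind. -/
def stirling2 : ℕ → ℕ → ℕ
  | 0, 0 => 1
  | 0, _ + 1 => 0
  | _ + 1, 0 => 0
  | n + 1, k + 1 => (k + 1) * stirling2 n (k + 1) + stirling2 n k

/-- Noncentral Stirling numbers of the second kind. -/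
noncomputable def ncS (n k : ℕ) (φ : ℝ) : ℝ :=
  ∑ j ∈ Finset.range (n + 1), (n.choose j : ℝ) * φ ^ (n - j) * (stirling2 j k : ℝ)

/-- Spillage mass function. -/
noncomputable def spillage (r n k : ℕ) (φ : ℝ) : ℝ :=
  (n.choose (k + r) : ℝ) * φ ^ (n - k - r) * (stirling2 (k + r) k : ℝ) / ncS n k φ

lemma stirling2_eq_zero : ∀ {n k : ℕ}, n < k → stirling2 n k = 0 := by
  intro n
  induction n with
  | zero => intro k h; match k, h with | k+1, _ => rfl
  | succ n ih =>
    intro k h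
    match k, h with
    | k+1, h =>
      show (k + 1) * stirling2 n (k + 1) + stirling2 n k = 0
      rw [ih (by omega), ih (by omega)]; simp

lemma desc_aux (m k : ℕ) : m * m.descFactorial k = m.descFactorial (k+1) + k * m.descFactorial k := by
  rw [Nat.descFactorial_succ]
  rcases le_or_gt k m with h | h
  · have h2 : m - k + k = m := Nat.sub_add_cancel h
    nlinarith [h2]
  · rw [Nat.descFactorial_eq_zero_iff_lt.mpr h]; simp

lemma stirling2_sum (x m : ℕ) : ∑ k ∈ range (x+1), stirling2 x k * m.descFactorial k = m ^ x := by
  induction x with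
  | zero => simp [stirling2]
  | succ x ih =>
    have hA : ∑ k ∈ range (x+1), (k+1) * stirling2 x (k+1) * m.descFactorial (k+1)
        = ∑ k ∈ range (x+1), k * stirling2 x k * m.descFactorial k := by
      rw [Finset.sum_range_succ, stirling2_eq_zero (Nat.lt_succ_self x),
        Finset.sum_range_succ']
      simp
    calc ∑ k ∈ range (x+2), stirling2 (x+1) k * m.descFactorial k
        = ∑ k ∈ range (x+1), stirling2 (x+1) (k+1) * m.descFactorial (k+1) := by
          rw [Finset.sum_range_succ']
          simp [show stirling2 (x+1) 0 = 0 from rfl]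
      _ = ∑ k ∈ range (x+1), ((k+1) * stirling2 x (k+1) * m.descFactorial (k+1)
            + stirling2 x k * m.descFactorial (k+1)) := by
          apply Finset.sum_congr rfl
          intro k _
          rw [show stirling2 (x+1) (k+1) = (k+1) * stirling2 x (k+1) + stirling2 x k from rfl,
            add_mul]
      _ = ∑ k ∈ range (x+1), k * stirling2 x k * m.descFactorial k
            + ∑ k ∈ range (x+1), stirling2 x k * m.descFactorial (k+1) := by
          rw [Finset.sum_add_distrib, hA]
      _ = ∑ k ∈ range (x+1), stirling2 x k * (m * m.descFactorial k) := by
          rw [← Finset.sum_add_distrib]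
          apply Finset.sum_congr rfl
          intro k _
          rw [desc_aux]
          ring
      _ = m ^ (x+1) := by
          rw [pow_succ, ← ih, Finset.sum_mul]
          apply Finset.sum_congr rfl
          intro k _
          ring

theorem stmt12 (n m x : ℕ) (hm : 1 ≤ m) (hx : x ≤ n) (θ : ℝ) (hθ0 : 0 < θ) (hθ1 : θ ≤ 1) :
    (n.choose x : ℝ) * θ ^ x * (1 - θ) ^ (n - x) =
      ∑ k ∈ Finset.range (x + 1),
        spillage (x - k) n k ((m : ℝ) * (1 - θ) / θ) *
          (θ ^ n / (m : ℝ) ^ n * (m.descFactorial k : ℝ) *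
            ncS n k ((m : ℝ) * (1 - θ) / θ)) := by
  set φ : ℝ := (m : ℝ) * (1 - θ) / θ with hφdef
  have hθne : θ ≠ 0 := hθ0.ne'
  have hm0 : (0 : ℝ) < m := by exact_mod_cast Nat.lt_of_lt_of_le Nat.zero_lt_one hm
  have hφ0 : 0 ≤ φ := div_nonneg (mul_nonneg hm0.le (by linarith)) hθ0.le
  have hterm : ∀ k ∈ range (x + 1),
      spillage (x - k) n k φ * (θ ^ n / (m : ℝ) ^ n * (m.descFactorial k : ℝ) * ncS n k φ)
      = (n.choose x : ℝ) * φ ^ (n - x) * (stirling2 x k : ℝ)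
          * (θ ^ n / (m : ℝ) ^ n) * (m.descFactorial k : ℝ) := by
    intro k hk
    have hkx : k ≤ x := Nat.lt_succ_iff.mp (mem_range.mp hk)
    have h1 : k + (x - k) = x := Nat.add_sub_cancel' hkx
    have h2 : n - k - (x - k) = n - x := by omega
    unfold spillage
    rw [h1, h2]
    by_cases hN : ncS n k φ = 0
    · have hz : (n.choose x : ℝ) * φ ^ (n - x) * (stirling2 x k : ℝ) = 0 := by
        have hnn : ∀ j ∈ range (n + 1),
            0 ≤ (n.choose j : ℝ) * φ ^ (n - j) * (stirling2 j k : ℝ) := by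
          intro j _; positivity
        have := (Finset.sum_eq_zero_iff_of_nonneg hnn).mp (by rw [← ncS]; exact hN)
          x (mem_range.mpr (by omega))
        exact this
      rw [hN, hz]
      simp
    · field_simp
  rw [Finset.sum_congr rfl hterm]
  have hsum : ∑ k ∈ range (x + 1), (stirling2 x k : ℝ) * (m.descFactorial k : ℝ)
      = (m : ℝ) ^ x := by
    have := stirling2_sum x m
    exact_mod_cast congrArg (Nat.cast : ℕ → ℝ) this
  have hre : ∀ k ∈ range (x + 1),
      (n.choose x : ℝ) * φ ^ (n - x) * (stirling2 x k : ℝ)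
          * (θ ^ n / (m : ℝ) ^ n) * (m.descFactorial k : ℝ)
      = ((n.choose x : ℝ) * φ ^ (n - x) * (θ ^ n / (m : ℝ) ^ n))
          * ((stirling2 x k : ℝ) * (m.descFactorial k : ℝ)) := by
    intro k _; ring
  rw [Finset.sum_congr rfl hre, ← Finset.mul_sum, hsum]
  have hφpow : φ ^ (n - x) = (m : ℝ) ^ (n - x) * (1 - θ) ^ (n - x) / θ ^ (n - x) := by
    rw [hφdef, div_pow, mul_pow]
  have hθn : θ ^ n = θ ^ x * θ ^ (n - x) := by
    rw [← pow_add, Nat.add_sub_cancel' hx]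
  have hmn : (m : ℝ) ^ n = (m : ℝ) ^ x * (m : ℝ) ^ (n - x) := by
    rw [← pow_add, Nat.add_sub_cancel' hx]
  rw [hφpow, hθn, hmn]
  have hθp : θ ^ (n - x) ≠ 0 := pow_ne_zero _ hθne
  have hmp : (m : ℝ) ^ (n - x) ≠ 0 := pow_ne_zero _ hm0.ne'
  have hmx : (m : ℝ) ^ x ≠ 0 := pow_ne_zero _ hm0.ne'
  field_simp
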